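/- If the set A := { h*_{E,p} : E a nonempty extreme set of B°, p ∈ V } is closed in the epigraph topology, then the set of extreme sets of the dual unit ball B° is closed in the Painlevé–Kuratowski topology, i.e. the Painlevé–Kuratowski limit of any convergent sequence of closed extreme sets of B° is again an extreme set of B°. -/

import Mathlib

open Filter Topology Set

noncomputable section

variable {V : Type*} [NormedAddCommGroup V] [NormedSpace ℝ V]

/-- The dual unit ball `B° = {y ∈ V* : ⟨y,x⟩ ≥ −1 for all x ∈ B}`. -/
def dualBall (V : Type*) [NormedAddCommGroup V] [NormedSpace ℝ V] :
    Set (V →L[ℝ] ℝ) := {y | ∀ x : V, ‖x‖ ≤ 1 → -1 ≤ y x}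

/-- `E` is an extreme set of `C`: `E` is a convex subset of `C` such that whenever a
relative interior point of a segment in `C` lies in `E`, both endpoints lie in `E`. -/
def IsExtremeSet {W : Type*} [AddCommGroup W] [Module ℝ W] (C E : Set W) : Prop :=
  Convex ℝ E ∧ IsExtreme ℝ C E

/-- The Legendre–Fenchel transform `h*_{E,p}` of the function `h_{E,p}` which equals
`⟨·,p⟩ − inf_{y∈E}⟨y,p⟩` on `E` and `+∞` elsewhere; explicitly
`h*_{E,p}(x) = sup_{q∈E} (⟨q,x⟩ − (⟨q,p⟩ − inf_{y∈E}⟨y,p⟩))`. -/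
def hstar (E : Set (V →L[ℝ] ℝ)) (p : V) : V → ℝ :=
  fun x => sSup ((fun q : V →L[ℝ] ℝ =>
    q x - (q p - sInf ((fun y : V →L[ℝ] ℝ => y p) '' E))) '' E)

/-- Painlevé–Kuratowski convergence of a sequence of sets `C n` to a set `L`:
(i) every point of `L` is the limit of points `x_n ∈ C_n` (for `n` large enough), and
(ii) every limit of a convergent sequence of points taken from a subsequence of the
`C_n` belongs to `L`. -/
def PKConverges {W : Type*} [TopologicalSpace W] (C : ℕ → Set W) (L : Set W) : Prop :=
  (∀ x ∈ L, ∃ (N : ℕ) (u : ℕ → W), (∀ n ≥ N, u n ∈ C n) ∧ Tendsto u atTop (𝓝 x)) ∧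
  (∀ φ : ℕ → ℕ, StrictMono φ → ∀ u : ℕ → W, (∀ k, u k ∈ C (φ k)) →
    ∀ x : W, Tendsto u atTop (𝓝 x) → x ∈ L)

/-- The set of extreme sets of the dual unit ball `B°` is closed in the
Painlevé–Kuratowski topology: any Painlevé–Kuratowski limit of a convergent sequence
of closed extreme sets of `B°` is again an extreme set of `B°`. -/
def ExtremeSetsClosed (V : Type*) [NormedAddCommGroup V] [NormedSpace ℝ V] : Prop :=
  ∀ C : ℕ → Set (V →L[ℝ] ℝ),
    (∀ n, IsClosed (C n) ∧ IsExtremeSet (dualBall V) (C n)) →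
    ∀ L : Set (V →L[ℝ] ℝ), IsClosed L → PKConverges C L →
      IsExtremeSet (dualBall V) L

/-- The epigraph of a function `f : V → ℝ ∪ {+∞}`, as a subset of `V × ℝ`. -/
def epigraph {V : Type*} (f : V → WithTop ℝ) : Set (V × ℝ) :=
  {p | f p.1 ≤ (p.2 : WithTop ℝ)}

/-- Membership in the set `A = {h*_{E,p} : E a nonempty extreme set of B°, p ∈ V}`. -/
def MemA {V : Type*} [NormedAddCommGroup V] [NormedSpace ℝ V] (f : V → ℝ) : Prop :=
  ∃ (E : Set (V →L[ℝ] ℝ)) (p : V),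
    IsExtremeSet (dualBall V) E ∧ E.Nonempty ∧ f = hstar E p

/-- The set `A` is closed in the epigraph topology: whenever a sequence of functions
in `A` converges in the epigraph topology (Painlevé–Kuratowski convergence of the
epigraphs in `V × ℝ`) to a lower-semicontinuous function `f : V → ℝ ∪ {+∞}`, the
limit `f` again belongs to `A`. -/
def AClosed (V : Type*) [NormedAddCommGroup V] [NormedSpace ℝ V] : Prop :=
  ∀ fn : ℕ → V → ℝ, (∀ n, MemA (fn n)) →
    ∀ f : V → WithTop ℝ, LowerSemicontinuous f →
      PKConverges (fun n => epigraph (fun x => ((fn n x : ℝ) : WithTop ℝ)))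
        (epigraph f) →
      ∃ g : V → ℝ, MemA g ∧ f = fun x => ((g x : ℝ) : WithTop ℝ)

namespace PKAux

/-- support function -/
def suppF (S : Set (V →L[ℝ] ℝ)) (x : V) : ℝ :=
  sSup ((fun q : V →L[ℝ] ℝ => q x) '' S)

lemma abs_apply_le {q : V →L[ℝ] ℝ} (hq : q ∈ dualBall V) (x : V) : |q x| ≤ ‖x‖ := by
  rcases eq_or_ne x 0 with rfl | hx
  · simp
  · have hxpos : (0:ℝ) < ‖x‖ := norm_pos_iff.2 hx
    have hn : ‖‖x‖⁻¹ • x‖ ≤ 1 := by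
      rw [norm_smul, norm_inv, norm_norm, inv_mul_cancel₀ hxpos.ne']
    have h1 := hq _ hn
    have h2 := hq _ (show ‖-(‖x‖⁻¹ • x)‖ ≤ 1 by rwa [norm_neg])
    rw [map_smul, smul_eq_mul] at h1
    rw [map_neg, map_smul, smul_eq_mul] at h2
    have hc : ‖x‖⁻¹ * ‖x‖ = 1 := inv_mul_cancel₀ hxpos.ne'
    rw [abs_le]
    constructor <;> nlinarith [mul_le_mul_of_nonneg_left h1 hxpos.le,
      mul_le_mul_of_nonneg_left h2 hxpos.le]

lemma bddAbove_image {S : Set (V →L[ℝ] ℝ)} (hS : S ⊆ dualBall V) (x : V) :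
    BddAbove ((fun q : V →L[ℝ] ℝ => q x) '' S) := by
  refine ⟨‖x‖, ?_⟩
  rintro _ ⟨q, hq, rfl⟩
  exact le_trans (le_abs_self _) (abs_apply_le (hS hq) x)

lemma le_suppF {S : Set (V →L[ℝ] ℝ)} (hS : S ⊆ dualBall V) {q : V →L[ℝ] ℝ}
    (hq : q ∈ S) (x : V) : q x ≤ suppF S x :=
  le_csSup (bddAbove_image hS x) (mem_image_of_mem _ hq)

lemma suppF_le {S : Set (V →L[ℝ] ℝ)} (hne : S.Nonempty) {x : V} {a : ℝ}
    (h : ∀ q ∈ S, q x ≤ a) : suppF S x ≤ a := by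
  refine csSup_le (hne.image _) ?_
  rintro _ ⟨q, hq, rfl⟩
  exact h q hq

lemma suppF_le_norm {S : Set (V →L[ℝ] ℝ)} (hS : S ⊆ dualBall V) (hne : S.Nonempty)
    (x : V) : suppF S x ≤ ‖x‖ :=
  suppF_le hne fun q hq => le_trans (le_abs_self _) (abs_apply_le (hS hq) x)

lemma suppF_sub {S : Set (V →L[ℝ] ℝ)} (hS : S ⊆ dualBall V) (hne : S.Nonempty)
    (x y : V) : suppF S x ≤ suppF S y + ‖x - y‖ := by
  refine suppF_le hne fun q hq => ?_
  have h1 : q x = q y + q (x - y) := by rw [map_sub]; ring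
  have h2 : q (x - y) ≤ ‖x - y‖ := le_trans (le_abs_self _) (abs_apply_le (hS hq) _)
  have h3 := le_suppF hS hq y
  linarith

lemma suppF_smul {S : Set (V →L[ℝ] ℝ)} (hS : S ⊆ dualBall V) (hne : S.Nonempty)
    {t : ℝ} (ht : 0 < t) (x : V) : suppF S (t • x) = t * suppF S x := by
  have hlub : IsLUB ((fun q : V →L[ℝ] ℝ => q x) '' S) (suppF S x) :=
    isLUB_csSup (hne.image _) (bddAbove_image hS x)
  have himg : (fun q : V →L[ℝ] ℝ => q (t • x)) '' S
      = (fun a : ℝ => t * a) '' ((fun q : V →L[ℝ] ℝ => q x) '' S) := by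
    rw [image_image]
    apply image_congr
    intro q _
    rw [map_smul, smul_eq_mul]
  have hlub2 : IsLUB ((fun q : V →L[ℝ] ℝ => q (t • x)) '' S) (t * suppF S x) := by
    rw [himg]
    constructor
    · rintro _ ⟨a, ha, rfl⟩
      exact mul_le_mul_of_nonneg_left (hlub.1 ha) ht.le
    · intro c hc
      have : suppF S x ≤ c / t := by
        apply hlub.2
        intro a ha
        rw [le_div_iff₀ ht, mul_comm]
        exact hc (mem_image_of_mem _ ha)
      calc t * suppF S x ≤ t * (c / t) := mul_le_mul_of_nonneg_left this ht.le
        _ = c := by field_simp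
  exact hlub2.csSup_eq (hne.image _)

lemma isClosed_dualBall : IsClosed (dualBall V) := by
  have : dualBall V = ⋂ x : V, {y : V →L[ℝ] ℝ | ‖x‖ ≤ 1 → -1 ≤ y x} := by
    ext y; simp [dualBall, Set.mem_iInter]
  rw [this]
  refine isClosed_iInter fun x => ?_
  by_cases hx : ‖x‖ ≤ 1
  · have : {y : V →L[ℝ] ℝ | ‖x‖ ≤ 1 → -1 ≤ y x} = {y : V →L[ℝ] ℝ | -1 ≤ y x} := by
      ext y; simp [hx]
    rw [this]
    exact isClosed_le continuous_const (ContinuousLinearMap.apply ℝ ℝ x).continuous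
  · have : {y : V →L[ℝ] ℝ | ‖x‖ ≤ 1 → -1 ≤ y x} = univ := by
      ext y; simp [hx]
    rw [this]; exact isClosed_univ

lemma isCompact_dualBall [FiniteDimensional ℝ V] : IsCompact (dualBall V) := by
  refine Metric.isCompact_of_isClosed_isBounded isClosed_dualBall ?_
  rw [isBounded_iff_forall_norm_le]
  refine ⟨1, fun q hq => ?_⟩
  refine ContinuousLinearMap.opNorm_le_bound q zero_le_one fun x => ?_
  rw [one_mul]
  calc ‖q x‖ = |q x| := rfl
    _ ≤ ‖x‖ := abs_apply_le hq x

lemma hstar_zero {E : Set (V →L[ℝ] ℝ)} (hne : E.Nonempty) :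
    hstar E 0 = suppF E := by
  funext x
  unfold hstar suppF
  have h0 : (fun y : V →L[ℝ] ℝ => y (0:V)) '' E = {0} := by
    have h1 : (fun y : V →L[ℝ] ℝ => y (0:V)) '' E = (fun _ : V →L[ℝ] ℝ => (0:ℝ)) '' E := by
      apply image_congr; intro a _; simp
    rw [h1, hne.image_const]
  rw [h0, csInf_singleton]
  congr 1
  apply image_congr; intro a _; simp

lemma exists_eval [FiniteDimensional ℝ V] (f : (V →L[ℝ] ℝ) →L[ℝ] ℝ) :
    ∃ z : V, ∀ r : V →L[ℝ] ℝ, f r = r z := by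
  classical
  let e : (V →ₗ[ℝ] ℝ) ≃ₗ[ℝ] (V →L[ℝ] ℝ) := LinearMap.toContinuousLinearMap
  let φ : Module.Dual ℝ (Module.Dual ℝ V) := f.toLinearMap.comp e.toLinearMap
  refine ⟨(Module.evalEquiv ℝ V).symm φ, fun r => ?_⟩
  have h := LinearEquiv.apply_symm_apply (Module.evalEquiv ℝ V) φ
  have h2 := congrArg (fun ψ : Module.Dual ℝ (Module.Dual ℝ V) => ψ (r : V →ₗ[ℝ] ℝ)) h
  simp only [Module.evalEquiv_apply, Module.Dual.eval_apply] at h2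
  have h3 : e (r : V →ₗ[ℝ] ℝ) = r := by
    have : ((r : V →ₗ[ℝ] ℝ) : V →ₗ[ℝ] ℝ) = e.symm r := by
      rw [LinearMap.coe_toContinuousLinearMap_symm]
    rw [this, e.apply_symm_apply]
  have h4 : φ (r : V →ₗ[ℝ] ℝ) = f r := by
    simp only [φ, LinearMap.comp_apply, LinearEquiv.coe_coe, ContinuousLinearMap.coe_coe, h3]
  exact h4.symm.trans h2.symm

lemma sep [FiniteDimensional ℝ V] {S : Set (V →L[ℝ] ℝ)} (h1 : Convex ℝ S)
    (h2 : IsClosed S) {q : V →L[ℝ] ℝ} (hq : q ∉ S) :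
    ∃ (z : V) (u : ℝ), (∀ r ∈ S, r z < u) ∧ u < q z := by
  obtain ⟨f, u, hfs, hfq⟩ := geometric_hahn_banach_closed_point h1 h2 hq
  obtain ⟨z, hz⟩ := exists_eval f
  exact ⟨z, u, fun r hr => hz r ▸ hfs r hr, hz q ▸ hfq⟩

lemma isClosed_of_extreme {W : Type*} [NormedAddCommGroup W] [NormedSpace ℝ W]
    [FiniteDimensional ℝ W] {C E : Set W} (hC : IsClosed C)
    (hEC : IsExtreme ℝ C E) (hconv : Convex ℝ E) : IsClosed E := by
  rcases E.eq_empty_or_nonempty with rfl | hne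
  · exact isClosed_empty
  rw [← closure_subset_iff_isClosed]
  intro x hx
  obtain ⟨y, hy⟩ := hne.intrinsicInterior hconv
  obtain ⟨y', hy'int, hy'⟩ := mem_intrinsicInterior.1 hy
  have hyE : y ∈ E := intrinsicInterior_subset hy
  have hAclosed : IsClosed ((affineSpan ℝ E : AffineSubspace ℝ W) : Set W) :=
    (affineSpan ℝ E).closed_of_finiteDimensional
  have hxA : x ∈ affineSpan ℝ E := closure_minimal (subset_affineSpan ℝ E) hAclosed hx
  have hyA : y ∈ affineSpan ℝ E := subset_affineSpan ℝ E hyE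
  have hmem : ∀ t : ℝ, y + t • (y - x) ∈ affineSpan ℝ E := by
    intro t
    have := (affineSpan ℝ E).smul_vsub_vadd_mem t hyA hxA hyA
    simpa [vsub_eq_sub, vadd_eq_add, add_comm] using this
  let c : ℝ → (affineSpan ℝ E) := fun t => ⟨y + t • (y - x), hmem t⟩
  have hc : Continuous c := by
    apply Continuous.subtype_mk
    exact continuous_const.add ((continuous_id.smul continuous_const))
  have hc0 : c 0 = (⟨y, hyA⟩ : affineSpan ℝ E) := by simp only [c, zero_smul, add_zero]
  have hopen : IsOpen (c ⁻¹' interior ((Subtype.val : affineSpan ℝ E → W) ⁻¹' E)) :=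
    isOpen_interior.preimage hc
  have h0mem : (0:ℝ) ∈ c ⁻¹' interior ((Subtype.val : affineSpan ℝ E → W) ⁻¹' E) := by
    rw [mem_preimage, hc0, show (⟨y, hyA⟩ : affineSpan ℝ E) = y' from Subtype.ext hy'.symm]
    exact hy'int
  obtain ⟨ε, hε, hball⟩ := Metric.isOpen_iff.1 hopen 0 h0mem
  set t := ε / 2 with htdef
  have ht : 0 < t := half_pos hε
  have htmem : t ∈ c ⁻¹' interior ((Subtype.val : affineSpan ℝ E → W) ⁻¹' E) := by
    apply hball
    rw [Metric.mem_ball, Real.dist_eq, sub_zero, abs_of_pos ht]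
    linarith
  have hwE : y + t • (y - x) ∈ E := by
    have h5 := interior_subset htmem
    exact h5
  have hxC : x ∈ C := closure_minimal hEC.1 hC hx
  have hwC : y + t • (y - x) ∈ C := hEC.1 hwE
  have h1t : (0:ℝ) < 1 + t := by linarith
  have hseg : y ∈ openSegment ℝ x (y + t • (y - x)) := by
    refine ⟨t / (1 + t), 1 / (1 + t), by positivity, by positivity, ?_, ?_⟩
    · rw [← add_div, add_comm t 1, div_self h1t.ne']
    · match_scalars <;> field_simp <;> ring
  exact hEC.2 hxC hwC hyE hseg

lemma suppF_tendsto [FiniteDimensional ℝ V] {C : ℕ → Set (V →L[ℝ] ℝ)}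
    {L : Set (V →L[ℝ] ℝ)} (hCne : ∀ n, (C n).Nonempty) (hCsub : ∀ n, C n ⊆ dualBall V)
    (hLne : L.Nonempty) (hLsub : L ⊆ dualBall V) (hpk : PKConverges C L) (x : V) :
    Tendsto (fun n => suppF (C n) x) atTop (𝓝 (suppF L x)) := by
  rw [Metric.tendsto_atTop]
  intro ε hε
  have hlow : ∀ᶠ n in atTop, suppF L x - ε < suppF (C n) x := by
    have hlt : suppF L x - ε < suppF L x := by linarith
    obtain ⟨_, ⟨q, hqL, rfl⟩, hq⟩ :=
      exists_lt_of_lt_csSup (hLne.image (fun q : V →L[ℝ] ℝ => q x)) hlt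
    obtain ⟨N, u, hu, hut⟩ := hpk.1 q hqL
    have hev : Tendsto (fun n => u n x) atTop (𝓝 (q x)) :=
      ((ContinuousLinearMap.apply ℝ ℝ x).continuous.tendsto q).comp hut
    have h1 : ∀ᶠ n in atTop, suppF L x - ε < u n x :=
      hev.eventually (eventually_gt_nhds hq)
    filter_upwards [h1, eventually_ge_atTop N] with n hn hN
    exact lt_of_lt_of_le hn (le_suppF (hCsub n) (hu n hN) x)
  have hup : ∀ᶠ n in atTop, suppF (C n) x < suppF L x + ε := by
    by_contra hcon
    rw [Filter.not_eventually] at hcon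
    have hfreq : ∃ᶠ n in atTop, suppF L x + ε ≤ suppF (C n) x :=
      hcon.mono fun n hn => not_lt.1 hn
    obtain ⟨φ, hφ, hφP⟩ := extraction_of_frequently_atTop hfreq
    have hex : ∀ k, ∃ q ∈ C (φ k), suppF L x + ε / 2 < q x := by
      intro k
      have hlt2 : suppF L x + ε / 2 < suppF (C (φ k)) x := by linarith [hφP k]
      obtain ⟨_, ⟨q, hqm, rfl⟩, hq⟩ :=
        exists_lt_of_lt_csSup ((hCne (φ k)).image (fun q : V →L[ℝ] ℝ => q x)) hlt2
      exact ⟨q, hqm, hq⟩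
    choose q hqmem hqgt using hex
    obtain ⟨r, hr, ψ, hψ, hrt⟩ := isCompact_dualBall.tendsto_subseq
      (fun k => hCsub _ (hqmem k))
    have hrL : r ∈ L := hpk.2 (φ ∘ ψ) (hφ.comp hψ) (q ∘ ψ) (fun k => hqmem (ψ k)) r hrt
    have hrx : Tendsto (fun k => (q (ψ k)) x) atTop (𝓝 (r x)) :=
      ((ContinuousLinearMap.apply ℝ ℝ x).continuous.tendsto r).comp hrt
    have h2 : suppF L x + ε / 2 ≤ r x :=
      le_of_tendsto_of_tendsto' tendsto_const_nhds hrx (fun k => (hqgt (ψ k)).le)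
    have h3 := le_suppF hLsub hrL x
    linarith
  obtain ⟨N1, h1⟩ := eventually_atTop.1 (hlow.and hup)
  refine ⟨N1, fun n hn => ?_⟩
  rw [Real.dist_eq, abs_sub_lt_iff]
  exact ⟨by linarith [(h1 n hn).2], by linarith [(h1 n hn).1]⟩

end PKAux

/-- If the set `A = {h*_{E,p}}` is closed in the epigraph topology, then the set of
extreme sets of the dual unit ball is closed in the Painlevé–Kuratowski topology. -/
theorem extremeSetsClosed_of_aClosed (V : Type*) [NormedAddCommGroup V]
    [NormedSpace ℝ V] [FiniteDimensional ℝ V] (h : AClosed V) :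
    ExtremeSetsClosed V := by
  intro C hC L hLclosed hpk
  rcases L.eq_empty_or_nonempty with rfl | hLne
  · refine ⟨convex_empty, empty_subset _, ?_⟩
    intro x hx y hy z hz
    exact absurd hz (notMem_empty z)
  obtain ⟨z₀, hz₀⟩ := hLne
  have hLne' : L.Nonempty := ⟨z₀, hz₀⟩
  obtain ⟨N, u₀, hu₀, -⟩ := hpk.1 z₀ hz₀
  set C' : ℕ → Set (V →L[ℝ] ℝ) := fun n => C (n + N) with hC'def
  have hC'ne : ∀ n, (C' n).Nonempty := fun n =>
    ⟨u₀ (n + N), hu₀ (n + N) (Nat.le_add_left N n)⟩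
  have hsub : ∀ n, C n ⊆ dualBall V := fun n => (hC n).2.2.1
  have hC'sub : ∀ n, C' n ⊆ dualBall V := fun n => hsub (n + N)
  have hLsub : L ⊆ dualBall V := by
    intro q hq
    obtain ⟨N₁, u, hu, hut⟩ := hpk.1 q hq
    exact PKAux.isClosed_dualBall.mem_of_tendsto hut
      (eventually_atTop.2 ⟨N₁, fun n hn => hsub n (hu n hn)⟩)
  have hpk' : PKConverges C' L := by
    constructor
    · intro x hx
      obtain ⟨N₁, u, hu, hut⟩ := hpk.1 x hx
      exact ⟨N₁, fun n => u (n + N), fun n hn => hu (n + N) (le_trans hn (Nat.le_add_right n N)),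
        hut.comp (tendsto_add_atTop_nat N)⟩
    · intro φ hφ u hu x hx
      exact hpk.2 (fun k => φ k + N) (fun a b hab => Nat.add_lt_add_right (hφ hab) N) u hu x hx
  have hLconv : Convex ℝ L := by
    intro x hx y hy a b ha hb hab
    obtain ⟨N₁, u, hu, hut⟩ := hpk.1 x hx
    obtain ⟨N₂, v, hv, hvt⟩ := hpk.1 y hy
    refine hpk.2 (fun k => k + max N₁ N₂) (fun i j hij => Nat.add_lt_add_right hij _)
      (fun k => a • u (k + max N₁ N₂) + b • v (k + max N₁ N₂)) ?_ (a • x + b • y) ?_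
    · intro k
      exact (hC (k + max N₁ N₂)).2.1
        (hu _ (le_trans (le_max_left _ _) (Nat.le_add_left _ k)))
        (hv _ (le_trans (le_max_right _ _) (Nat.le_add_left _ k))) ha hb hab
    · exact ((hut.comp (tendsto_add_atTop_nat _)).const_smul a).add
        ((hvt.comp (tendsto_add_atTop_nat _)).const_smul b)
  -- the limit support function and its lower semicontinuity
  set f : V → WithTop ℝ := fun x => ((PKAux.suppF L x : ℝ) : WithTop ℝ) with hf
  have hcont : Continuous (fun x => PKAux.suppF L x) := by
    refine LipschitzWith.continuous (K := 1) (LipschitzWith.of_dist_le_mul fun x y => ?_)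
    rw [Real.dist_eq, NNReal.coe_one, one_mul, dist_eq_norm, abs_sub_le_iff]
    constructor
    · linarith [PKAux.suppF_sub hLsub hLne' x y]
    · have h2 := PKAux.suppF_sub hLsub hLne' y x
      rw [norm_sub_rev] at h2
      linarith
  have hlsc : LowerSemicontinuous f := by
    intro x y hy
    induction y using WithTop.recTopCoe with
    | top => exact absurd hy not_top_lt
    | coe r =>
      have hr : r < PKAux.suppF L x := WithTop.coe_lt_coe.1 hy
      exact ((hcont.tendsto x).eventually (eventually_gt_nhds hr)).mono
        fun x' hx' => WithTop.coe_lt_coe.2 hx'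
  -- pointwise convergence of the support functions
  have hptw : ∀ x, Tendsto (fun n => PKAux.suppF (C' n) x) atTop (𝓝 (PKAux.suppF L x)) :=
    fun x => PKAux.suppF_tendsto hC'ne hC'sub hLne' hLsub hpk' x
  -- Painlevé–Kuratowski convergence of the epigraphs
  have hepi2 : PKConverges
      (fun n => epigraph (fun x => ((PKAux.suppF (C' n) x : ℝ) : WithTop ℝ)))
      (epigraph f) := by
    constructor
    · rintro ⟨x, α⟩ hmem
      have hα : PKAux.suppF L x ≤ α := WithTop.coe_le_coe.1 hmem
      refine ⟨0, fun n => (x, max α (PKAux.suppF (C' n) x)), fun n _ => ?_, ?_⟩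
      · exact WithTop.coe_le_coe.2 (le_max_right _ _)
      · have ht : Tendsto (fun n => max α (PKAux.suppF (C' n) x)) atTop
            (𝓝 (max α (PKAux.suppF L x))) := tendsto_const_nhds.max (hptw x)
        rw [max_eq_left hα] at ht
        exact Tendsto.prodMk_nhds tendsto_const_nhds ht
    · rintro φ hφ w hw ⟨x, α⟩ hlim
      have hx1 : Tendsto (fun k => (w k).1) atTop (𝓝 x) := (continuous_fst.tendsto _).comp hlim
      have hx2 : Tendsto (fun k => (w k).2) atTop (𝓝 α) := (continuous_snd.tendsto _).comp hlim
      have hineq : ∀ k, PKAux.suppF (C' (φ k)) x ≤ (w k).2 + ‖x - (w k).1‖ := by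
        intro k
        have h1 : PKAux.suppF (C' (φ k)) (w k).1 ≤ (w k).2 := WithTop.coe_le_coe.1 (hw k)
        linarith [PKAux.suppF_sub (hC'sub (φ k)) (hC'ne (φ k)) x (w k).1]
      have hleft : Tendsto (fun k => PKAux.suppF (C' (φ k)) x) atTop
          (𝓝 (PKAux.suppF L x)) := (hptw x).comp hφ.tendsto_atTop
      have hright : Tendsto (fun k => (w k).2 + ‖x - (w k).1‖) atTop (𝓝 (α + 0)) :=
        hx2.add (by simpa using ((tendsto_const_nhds (x := x)).sub hx1).norm)
      have hfin : PKAux.suppF L x ≤ α := by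
        have := le_of_tendsto_of_tendsto' hleft hright hineq
        simpa using this
      exact WithTop.coe_le_coe.2 hfin
  have hMemA : ∀ n, MemA (hstar (C' n) 0) := fun n =>
    ⟨C' n, 0, (hC (n + N)).2, hC'ne n, rfl⟩
  have hepi : PKConverges
      (fun n => epigraph (fun x => ((hstar (C' n) 0 x : ℝ) : WithTop ℝ)))
      (epigraph f) := by
    have heq : (fun n => epigraph (fun x => ((hstar (C' n) 0 x : ℝ) : WithTop ℝ)))
        = fun n => epigraph (fun x => ((PKAux.suppF (C' n) x : ℝ) : WithTop ℝ)) := by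
      funext n
      rw [PKAux.hstar_zero (hC'ne n)]
    rw [heq]
    exact hepi2
  obtain ⟨g, ⟨E, p, hEext, hEne, hgE⟩, hfg⟩ := h (fun n => hstar (C' n) 0) hMemA f hlsc hepi
  have hLE : ∀ x, PKAux.suppF L x = hstar E p x := by
    intro x
    have h5 : ((PKAux.suppF L x : ℝ) : WithTop ℝ) = ((g x : ℝ) : WithTop ℝ) := congrFun hfg x
    rw [WithTop.coe_inj.1 h5, hgE]
  have hEsub : E ⊆ dualBall V := hEext.2.1
  set m : ℝ := sInf ((fun y : V →L[ℝ] ℝ => y p) '' E) with hm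
  have hbdd : BddBelow ((fun y : V →L[ℝ] ℝ => y p) '' E) := by
    refine ⟨-‖p‖, ?_⟩
    rintro _ ⟨q, hq, rfl⟩
    linarith [(abs_le.1 (PKAux.abs_apply_le (hEsub hq) p)).1]
  have hmle : ∀ q ∈ E, m ≤ q p := fun q hq => csInf_le hbdd (mem_image_of_mem _ hq)
  have hbddh : ∀ x : V, BddAbove ((fun q : V →L[ℝ] ℝ => q x - (q p - m)) '' E) := by
    intro x
    refine ⟨‖x‖, ?_⟩
    rintro _ ⟨q, hq, rfl⟩
    have h1 := (abs_le.1 (PKAux.abs_apply_le (hEsub hq) x)).2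
    have h2 := hmle q hq
    simp only [upperBounds, mem_setOf_eq]
    linarith
  have key1 : ∀ x, PKAux.suppF L x ≤ PKAux.suppF E x := by
    intro x
    rw [hLE x]
    refine csSup_le (hEne.image _) ?_
    rintro _ ⟨q, hq, rfl⟩
    show q x - (q p - m) ≤ PKAux.suppF E x
    have h1 := hmle q hq
    have h2 := PKAux.le_suppF hEsub hq x
    linarith
  have key2 : ∀ q ∈ E, ∀ x, q x ≤ PKAux.suppF L x := by
    intro q hq x
    refine le_of_forall_pos_le_add fun ε hε => ?_
    set c : ℝ := q p - m with hc
    have hc0 : 0 ≤ c := sub_nonneg.2 (hmle q hq)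
    set t : ℝ := max 1 (c / ε) with htdef
    have ht : (0:ℝ) < t := lt_of_lt_of_le one_pos (le_max_left _ _)
    have h1 : q (t • x) - c ≤ hstar E p (t • x) :=
      le_csSup (hbddh (t • x)) (mem_image_of_mem _ hq)
    rw [← hLE (t • x)] at h1
    have h3 : PKAux.suppF L (t • x) = t * PKAux.suppF L x :=
      PKAux.suppF_smul hLsub hLne' ht x
    have h4 : q (t • x) = t * q x := by rw [map_smul, smul_eq_mul]
    have h5 : c / t ≤ ε := by
      have h6 : c / ε ≤ t := le_max_right _ _
      have h7 : c ≤ t * ε := (div_le_iff₀ hε).1 h6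
      rw [div_le_iff₀ ht]
      linarith
    have h8 : t * q x - c ≤ t * PKAux.suppF L x := by rw [← h4, ← h3]; exact h1
    have h9 : q x - PKAux.suppF L x ≤ c / t := by
      rw [le_div_iff₀ ht]
      nlinarith
    linarith
  have key3 : ∀ x, PKAux.suppF E x = PKAux.suppF L x := fun x =>
    le_antisymm (PKAux.suppF_le hEne fun q hq => key2 q hq x) (key1 x)
  have hEclosed : IsClosed E :=
    PKAux.isClosed_of_extreme PKAux.isClosed_dualBall hEext.2 hEext.1
  have hLeqE : L = E := by
    apply Subset.antisymm
    · intro q hq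
      by_contra hqE
      obtain ⟨z, uu, hs1, hs2⟩ := PKAux.sep hEext.1 hEclosed hqE
      have h1 : PKAux.suppF E z ≤ uu := PKAux.suppF_le hEne fun r hr => (hs1 r hr).le
      have h2 : q z ≤ PKAux.suppF L z := PKAux.le_suppF hLsub hq z
      rw [← key3 z] at h2
      linarith
    · intro q hq
      by_contra hqL
      obtain ⟨z, uu, hs1, hs2⟩ := PKAux.sep hLconv hLclosed hqL
      have h1 : PKAux.suppF L z ≤ uu := PKAux.suppF_le hLne' fun r hr => (hs1 r hr).le
      have h2 : q z ≤ PKAux.suppF E z := PKAux.le_suppF hEsub hq z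
      rw [key3 z] at h2
      linarith
  rw [hLeqE]
  exact hEext
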